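/- Let N be a free ℤ-module of finite rank ρ equipped with a symmetric ℤ-valued bilinear form B, and let L ⊆ N be a saturated submodule of rank 10 such that the restriction of B to L is equal to 2·B₀ for some unimodular symmetric ℤ-valued bilinear form B₀ on L. Then 2^(20−ρ) divides the determinant of the Gram matrix of B with respect to any ℤ-basis of N. -/

import Mathlib

open Matrix

lemma aux_det_dvd {n k : ℕ} (M : Matrix (Fin n) (Fin n) ℤ)
    (u : Fin k → (Fin n → ZMod 2))
    (hu : LinearIndependent (ZMod 2) u)
    (hMu : ∀ i, (M.map (Int.cast : ℤ → ZMod 2)).mulVec (u i) = 0) :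
    (2 : ℤ) ^ k ∣ M.det := by
  classical
  -- extend u to a basis of (Fin n → ZMod 2)
  let β' := Module.Basis.sumExtend hu
  have hβ'inl : ∀ i, β' (Sum.inl i) = u i := by
    intro i
    simp only [β', Module.Basis.sumExtend, Module.Basis.reindex_apply, Equiv.symm_symm]
    simp [Trans.trans, Equiv.trans_apply, Module.Basis.extend_apply_self,
      Equiv.Set.sumDiffSubset, Equiv.sumCongr, Equiv.ofInjective_apply, Sum.map]
    rfl
  haveI : Fintype (Fin k ⊕ Module.Basis.sumExtendIndex hu) := FiniteDimensional.fintypeBasisIndex β'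
  have hcard : Fintype.card (Fin k ⊕ Module.Basis.sumExtendIndex hu) = n := by
    have := Module.finrank_eq_card_basis β'
    simpa [Module.finrank_pi] using this.symm
  let e : (Fin k ⊕ Module.Basis.sumExtendIndex hu) ≃ Fin n :=
    Fintype.equivOfCardEq (by simp [hcard])
  let β : Module.Basis (Fin n) (ZMod 2) (Fin n → ZMod 2) := β'.reindex e
  let ι : Fin k → Fin n := fun i => e (Sum.inl i)
  have hιinj : Function.Injective ι := fun a b h => by
    simpa using e.injective h
  have hβι : ∀ i, β (ι i) = u i := by
    intro i
    simp [β, ι, Module.Basis.reindex_apply, hβ'inl]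
  -- integer lift of the basis as a matrix of columns
  let V : Matrix (Fin n) (Fin n) ℤ := Matrix.of fun s j => ((β j s).val : ℤ)
  have hVmap : V.map (Int.cast : ℤ → ZMod 2) = Matrix.of fun s j => β j s := by
    ext s j
    simp [V, Matrix.map_apply, ZMod.intCast_cast, ZMod.natCast_val, ZMod.cast_id]
  -- V is invertible mod 2
  have hVdet : ¬ ((2:ℤ) ∣ V.det) := by
    intro h2
    have : ((V.det : ℤ) : ZMod 2) = 0 := by
      exact_mod_cast (ZMod.intCast_zmod_eq_zero_iff_dvd V.det 2).2 h2
    have this2 : ((Int.castRingHom (ZMod 2)).mapMatrix V).det = 0 := by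
      rw [← RingHom.map_det]; exact this
    have hVu : (V.map (Int.cast : ℤ → ZMod 2)).det ≠ 0 := by
      rw [hVmap]
      have : IsUnit ((Pi.basisFun (ZMod 2) (Fin n)).toMatrix ⇑β).det :=
        letI := (Pi.basisFun (ZMod 2) (Fin n)).invertibleToMatrix β
        Matrix.isUnit_det_of_invertible _
      have hEq : (Pi.basisFun (ZMod 2) (Fin n)).toMatrix ⇑β
          = Matrix.of fun s j => β j s := by
        ext s j
        simp [Module.Basis.toMatrix_apply]
      rw [hEq] at this
      exact this.ne_zero
    exact hVu (by simpa [RingHom.mapMatrix_apply] using this2)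
  -- the columns of M * V indexed by `ι` have even entries
  have hmapmul : (M * V).map (Int.cast : ℤ → ZMod 2)
      = (M.map Int.cast) * (V.map Int.cast) := by
    ext s j
    simp [Matrix.map_apply, Matrix.mul_apply]
  have hcol : ∀ i s, (2:ℤ) ∣ (M * V) s (ι i) := by
    intro i s
    have h0 : (((M * V) s (ι i) : ℤ) : ZMod 2) = 0 := by
      have : ((M * V).map (Int.cast : ℤ → ZMod 2)) s (ι i)
          = (M.map (Int.cast : ℤ → ZMod 2)).mulVec (u i) s := by
        rw [hmapmul, Matrix.mul_apply, Matrix.mulVec]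
        simp only [dotProduct]
        refine Finset.sum_congr rfl fun t _ => ?_
        rw [hVmap]
        simp [hβι]
      simpa [Matrix.map_apply, hMu i] using this
    exact (ZMod.intCast_zmod_eq_zero_iff_dvd _ 2).1 h0
  -- factor 2^k out of det (M * V)
  let S : Finset (Fin n) := Finset.univ.image ι
  have hScard : S.card = k := by
    rw [Finset.card_image_of_injective _ hιinj, Finset.card_univ, Fintype.card_fin]
  let A : Matrix (Fin n) (Fin n) ℤ :=
    Matrix.of fun s j => if j ∈ S then (M * V) s j / 2 else (M * V) s j
  have hMV : (M * V) = Matrix.of fun s j => (if j ∈ S then (2:ℤ) else 1) * A s j := by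
    ext s j
    by_cases hj : j ∈ S
    · obtain ⟨i, -, rfl⟩ := Finset.mem_image.1 hj
      simp only [A, Matrix.of_apply, hj, if_true]
      rw [Int.mul_ediv_cancel' (hcol i s)]
    · simp [A, hj]
  have hdet : (M * V).det = 2 ^ k * A.det := by
    rw [hMV, Matrix.det_mul_row]
    congr 1
    rw [Finset.prod_ite_mem Finset.univ S (fun _ => (2:ℤ)), Finset.univ_inter,
      Finset.prod_const, hScard]
  have hdvd : (2:ℤ) ^ k ∣ M.det * V.det := by
    rw [← Matrix.det_mul]; exact ⟨A.det, hdet⟩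
  have hcop : IsCoprime ((2:ℤ) ^ k) V.det :=
    ((Int.prime_two.coprime_iff_not_dvd).2 hVdet).pow_left
  exact hcop.dvd_of_dvd_mul_right hdvd
theorem modFinite_congr {M : Type*} [AddCommGroup M] {i1 i2 : Module ℤ M}
    (h : @Module.Finite ℤ M _ _ i1) : @Module.Finite ℤ M _ _ i2 := by
  haveI := AddCommGroup.uniqueIntModule (M := M)
  cases Subsingleton.elim i1 i2; exact h

theorem modFree_congr {M : Type*} [AddCommGroup M] {i1 i2 : Module ℤ M}
    (h : @Module.Free ℤ M _ _ i1) : @Module.Free ℤ M _ _ i2 := by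
  haveI := AddCommGroup.uniqueIntModule (M := M)
  cases Subsingleton.elim i1 i2; exact h

theorem finrank_congr {M : Type*} [AddCommGroup M] (i1 i2 : Module ℤ M) :
    @Module.finrank ℤ M _ _ i1 = @Module.finrank ℤ M _ _ i2 := by
  haveI := AddCommGroup.uniqueIntModule (M := M)
  cases Subsingleton.elim i1 i2; rfl


/-- **Proposition 3.3** (lattice-theoretic content): if a free `ℤ`-module `N` of rank `ρ` with a
symmetric bilinear form `B` contains a saturated rank-10 submodule `L` on which `B` restricts to
twice a unimodular form, then `2 ^ (20 - ρ)` divides the determinant of the Gram matrix of `B`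
in any basis of `N`. -/
theorem pow_two_dvd_gram_det_of_twice_unimodular_saturated_sublattice
    (ρ : ℕ) (N : Type*) [AddCommGroup N] [Module ℤ N]
    [Module.Free ℤ N] [Module.Finite ℤ N]
    (hrank : Module.finrank ℤ N = ρ)
    (B : N →ₗ[ℤ] N →ₗ[ℤ] ℤ)
    (hsymm : ∀ x y, B x y = B y x)
    (L : Submodule ℤ N)
    (hLsat : ∀ (n : ℤ) (x : N), n ≠ 0 → n • x ∈ L → x ∈ L)
    (hLrank : Module.finrank ℤ L = 10)
    (B₀ : L →ₗ[ℤ] L →ₗ[ℤ] ℤ)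
    (hB₀symm : ∀ x y : L, B₀ x y = B₀ y x)
    (hB₀unimod : Function.Bijective ⇑B₀)
    (hrestr : ∀ x y : L, B (x : N) (y : N) = 2 * B₀ x y)
    (b : Module.Basis (Fin ρ) ℤ N) :
    (2 : ℤ) ^ (20 - ρ) ∣ (Matrix.of fun i j => B (b i) (b j)).det := by
  classical
  set G : Matrix (Fin ρ) (Fin ρ) ℤ := Matrix.of fun i j => B (b i) (b j) with hG
  haveI := Module.Free.instIsTorsionFree (R := ℤ) (M := N)
  haveI hfin1 : @Module.Finite ℤ ↥L _ _ (L.module) := inferInstance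
  haveI hfree1 : @Module.Free ℤ ↥L _ _ (L.module) := inferInstance
  have hLrank' : @Module.finrank ℤ ↥L _ _ (L.module) = 10 :=
    (finrank_congr (L.module) _).trans hLrank
  letI : Module ℤ ↥L := L.module
  haveI : Module.Finite ℤ ↥L := hfin1
  haveI : Module.Free ℤ ↥L := hfree1
  have hρ10 : 10 ≤ ρ := by
    have h := Submodule.finrank_le (R := ℤ) L
    rw [hrank, hLrank'] at h
    exact h
  rcases le_or_gt 20 ρ with hρ | hρ
  · simp [Nat.sub_eq_zero_of_le hρ]
  -- a basis of L and the coordinate matrix P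
  let c : Module.Basis (Fin 10) ℤ L := (Module.finBasis ℤ L).reindex (finCongr hLrank')
  let P : Matrix (Fin ρ) (Fin 10) ℤ := Matrix.of fun s i => b.repr (c i : N) s
  -- the Gram matrix of B between basis elements of L and of N
  have hGP : ∀ s j, (G * P) s j = B (b s) ((c j : N)) := by
    intro s j
    rw [Matrix.mul_apply]
    conv_rhs => rw [← b.sum_repr ((c j : N))]
    rw [map_sum (B (b s))]
    refine Finset.sum_congr rfl fun t _ => ?_
    rw [(B (b s)).map_smul, smul_eq_mul]
    simp only [G, P, Matrix.of_apply]
    ring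
  have key1 : ∀ i j, (Pᵀ * G * P) i j = B (c i : N) (c j : N) := by
    intro i j
    rw [Matrix.mul_assoc, Matrix.mul_apply]
    conv_rhs => rw [← b.sum_repr ((c i : N))]
    rw [map_sum B, LinearMap.sum_apply]
    refine Finset.sum_congr rfl fun s _ => ?_
    rw [B.map_smul, LinearMap.smul_apply, smul_eq_mul, hGP s j]
    simp only [Matrix.transpose_apply, P, Matrix.of_apply]
  -- reductions mod 2
  set Pb : Matrix (Fin ρ) (Fin 10) (ZMod 2) := P.map (Int.cast : ℤ → ZMod 2) with hPb
  set Gb : Matrix (Fin ρ) (Fin ρ) (ZMod 2) := G.map (Int.cast : ℤ → ZMod 2) with hGb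
  have key2 : Pbᵀ * Gb * Pb = 0 := by
    ext i j
    have hval : (((Pᵀ * G * P) i j : ℤ) : ZMod 2) = 0 := by
      rw [key1 i j, hrestr (c i) (c j), Int.cast_mul,
        show ((2:ℤ) : ZMod 2) = 0 by decide, zero_mul]
    have hcalc : (Pbᵀ * Gb * Pb) i j = (((Pᵀ * G * P) i j : ℤ) : ZMod 2) := by
      simp only [Matrix.mul_apply, Matrix.transpose_apply, Matrix.map_apply, hPb, hGb]
      push_cast
      rfl
    rw [hcalc, hval]
    rfl
  -- saturation gives injectivity of Pb mod 2
  have key3 : ∀ x : Fin 10 → ZMod 2, Pb.mulVec x = 0 → x = 0 := by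
    intro x hx
    set x' : Fin 10 → ℤ := fun i => ((x i).val : ℤ) with hx'def
    have hx' : ∀ i, ((x' i : ℤ) : ZMod 2) = x i := by
      intro i
      simp [x', ZMod.intCast_cast, ZMod.natCast_val, ZMod.cast_id]
    have heven : ∀ s, (2:ℤ) ∣ P.mulVec x' s := by
      intro s
      have hcast : ((P.mulVec x' s : ℤ) : ZMod 2) = Pb.mulVec x s := by
        simp only [Matrix.mulVec, dotProduct, hPb, Matrix.map_apply]
        push_cast
        exact Finset.sum_congr rfl fun i _ => by rw [hx' i]
      rw [hx] at hcast
      exact (ZMod.intCast_zmod_eq_zero_iff_dvd _ 2).1 (by simpa using hcast)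
    set vL : L := c.equivFun.symm x' with hvL
    have hcrepr : ∀ i, c.repr vL i = x' i := by
      intro i
      have h1 := c.equivFun.apply_symm_apply x'
      have h2 : c.equivFun vL i = x' i := by rw [hvL, h1]
      rw [← h2, Module.Basis.equivFun_apply]
    have hvrepr : ∀ s, b.repr (vL : N) s = P.mulVec x' s := by
      intro s
      have hcoe : ((vL : L) : N) = L.subtype (c.equivFun.symm x') := rfl
      rw [hcoe, Module.Basis.equivFun_symm_apply, map_sum, map_sum, Finsupp.finset_sum_apply]
      rw [Matrix.mulVec]
      simp only [dotProduct, P, Matrix.of_apply]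
      refine Finset.sum_congr rfl fun i _ => ?_
      rw [(L.subtype).map_smul, b.repr.map_smul, Finsupp.smul_apply, smul_eq_mul]
      rw [mul_comm]
      rfl
    set w : N := b.equivFun.symm (fun s => P.mulVec x' s / 2) with hwdef
    have hwrepr : ∀ s, b.repr w s = P.mulVec x' s / 2 := by
      intro s
      have h1 := b.equivFun.apply_symm_apply (fun s => P.mulVec x' s / 2)
      have h2 : b.equivFun w s = P.mulVec x' s / 2 := by rw [hwdef, h1]
      rw [← h2, Module.Basis.equivFun_apply]
    have hww : w + w = (vL : N) := by
      apply b.repr.injective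
      ext s
      rw [map_add, Finsupp.add_apply, hwrepr s, hvrepr s]
      obtain ⟨y, hy⟩ := heven s
      omega
    have hwL : w ∈ L := by
      apply hLsat 2 w two_ne_zero
      have h2 : (2:ℤ) • w = w + w := by
        first
        | exact two_zsmul w
        | exact two_smul ℤ w
      rw [h2, hww]
      exact vL.2
    have hx'even : ∀ i, (2:ℤ) ∣ x' i := by
      intro i
      have hsplit : vL = (⟨w, hwL⟩ : L) + ⟨w, hwL⟩ := by
        apply Subtype.ext
        rw [← hww]
        rfl
      have h3 := hcrepr i
      rw [hsplit, map_add, Finsupp.add_apply] at h3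
      exact ⟨c.repr (⟨w, hwL⟩ : L) i, by omega⟩
    funext i
    show x i = 0
    rw [← hx' i]
    obtain ⟨y, hy⟩ := hx'even i
    rw [hy, Int.cast_mul, show ((2:ℤ) : ZMod 2) = 0 by decide, zero_mul]
  -- pass to linear maps over ZMod 2
  have hPbinj : Function.Injective Pb.mulVecLin := by
    rw [← LinearMap.ker_eq_bot, LinearMap.ker_eq_bot']
    intro x hx0
    exact key3 x (by simpa [Matrix.mulVecLin_apply] using hx0)
  set f := (Gb * Pb).mulVecLin with hf
  have hrangef : LinearMap.range f ≤ LinearMap.ker (Pbᵀ.mulVecLin) := by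
    rintro _ ⟨x, rfl⟩
    simp only [LinearMap.mem_ker, hf, Matrix.mulVecLin_apply]
    rw [Matrix.mulVec_mulVec, ← Matrix.mul_assoc, key2]
    simp
  have h10 : Module.finrank (ZMod 2) (LinearMap.range Pb.mulVecLin) = 10 := by
    rw [LinearMap.finrank_range_of_inj hPbinj]
    simp
  have hTrank : Pbᵀ.rank = 10 := by
    rw [Matrix.rank_transpose, Matrix.rank]
    exact h10
  have hkerT : Module.finrank (ZMod 2) (LinearMap.ker (Pbᵀ.mulVecLin)) + 10 = ρ := by
    have h1 := LinearMap.finrank_range_add_finrank_ker (Pbᵀ.mulVecLin)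
    rw [show Module.finrank (ZMod 2) (LinearMap.range Pbᵀ.mulVecLin) = Pbᵀ.rank from rfl,
      hTrank] at h1
    simp only [Module.finrank_pi, Fintype.card_fin] at h1
    omega
  have hkerf : 20 - ρ ≤ Module.finrank (ZMod 2) (LinearMap.ker f) := by
    have h1 := LinearMap.finrank_range_add_finrank_ker f
    simp only [Module.finrank_pi, Fintype.card_fin] at h1
    have h2 : Module.finrank (ZMod 2) (LinearMap.range f)
        ≤ Module.finrank (ZMod 2) (LinearMap.ker (Pbᵀ.mulVecLin)) :=
      Submodule.finrank_mono hrangef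
    omega
  -- construct the linearly independent kernel family
  set K := LinearMap.ker f with hK
  let bK := Module.finBasis (ZMod 2) K
  have hle : 20 - ρ ≤ Module.finrank (ZMod 2) K := hkerf
  set gmap : K →ₗ[ZMod 2] (Fin ρ → ZMod 2) := Pb.mulVecLin.comp K.subtype with hgmap
  set u : Fin (20 - ρ) → (Fin ρ → ZMod 2) := fun i => gmap (bK (Fin.castLE hle i)) with hu0
  have hu : LinearIndependent (ZMod 2) u := by
    have h1 : LinearIndependent (ZMod 2) (fun i : Fin (20 - ρ) => bK (Fin.castLE hle i)) :=
      bK.linearIndependent.comp _ (Fin.castLE_injective hle)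
    exact h1.map' gmap
      (LinearMap.ker_eq_bot.2 (by
        rw [hgmap, LinearMap.coe_comp]
        exact hPbinj.comp (Submodule.injective_subtype K)))
  have hMu : ∀ i, (G.map (Int.cast : ℤ → ZMod 2)).mulVec (u i) = 0 := by
    intro i
    have hmem : (bK (Fin.castLE hle i) : Fin 10 → ZMod 2) ∈ LinearMap.ker f :=
      (bK (Fin.castLE hle i)).2
    have hfx : (Gb * Pb).mulVec ((bK (Fin.castLE hle i) : K) : Fin 10 → ZMod 2) = 0 := by
      have h4 := LinearMap.mem_ker.1 hmem
      rwa [hf, Matrix.mulVecLin_apply] at h4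
    show Gb.mulVec (u i) = 0
    rw [hu0]
    simp only [hgmap, LinearMap.coe_comp, Function.comp_apply, Matrix.mulVecLin_apply,
      Submodule.coe_subtype]
    rw [Matrix.mulVec_mulVec]
    exact hfx
  exact aux_det_dvd G u hu hMu
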